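/- arXiv:1211.4293 — 2 statements merged into one kernel-verified Lean document; each statement's English description precedes it below -/
import Mathlib

section
/- Let Φ satisfy the RIP of order N with constant δ_N, let x ∈ ℝⁿ be supported on T, and let T^k ⊆ {1,…,n} be any index set. Let r = y - P_{T^k} y where y = Φx and P_{T^k} is the orthogonal projection onto span(Φ_{T^k}). If |T \ T^k| ≤ N, then ‖r‖₂² ≤ (1 + δ_N)·‖x_{T\T^k}‖₂². -/
lemma euclid_norm_sq {m : ℕ} (w : EuclideanSpace ℝ (Fin m)) :
    ‖w‖ ^ 2 = ∑ j, w j ^ 2 := by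
  rw [EuclideanSpace.norm_eq, Real.sq_sqrt (by positivity)]
  simp [Real.norm_eq_abs, sq_abs]

/-- If `Φ` satisfies the upper RIP inequality of order `N` with constant `δ`,
`x` is supported on `T`, `y = Φx`, `r = y - P_{T^k} y`, and `|T \ T^k| ≤ N`,
then `‖r‖² ≤ (1 + δ) ‖x_{T \ T^k}‖²`. -/
theorem residual_le_rip {m n : ℕ} (Φ : Matrix (Fin m) (Fin n) ℝ) (N : ℕ) (δ : ℝ)
    (hRIP : ∀ z : Fin n → ℝ, (Finset.univ.filter fun i => z i ≠ 0).card ≤ N →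
      ∑ j, (Φ.mulVec z j) ^ 2 ≤ (1 + δ) * ∑ i, (z i) ^ 2)
    (x : Fin n → ℝ) (T : Finset (Fin n)) (hT : ∀ i, x i ≠ 0 → i ∈ T)
    (Tk : Finset (Fin n)) (hcard : (T \ Tk).card ≤ N)
    (y r : EuclideanSpace ℝ (Fin m)) (hy : ∀ j, y j = Φ.mulVec x j)
    (hr : r = y - (Submodule.orthogonalProjectionOnto
      (Submodule.span ℝ {v : EuclideanSpace ℝ (Fin m) | ∃ i ∈ Tk, v = fun j => Φ j i}) y :
      EuclideanSpace ℝ (Fin m))) :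
    ‖r‖ ^ 2 ≤ (1 + δ) * ∑ i ∈ T \ Tk, (x i) ^ 2 := by
  set K := Submodule.span ℝ {v : EuclideanSpace ℝ (Fin m) | ∃ i ∈ Tk, v = fun j => Φ j i}
  -- split x
  set x2 : Fin n → ℝ := fun i => if i ∈ Tk then 0 else x i with hx2
  set x1 : Fin n → ℝ := fun i => if i ∈ Tk then x i else 0 with hx1
  have hsplit : ∀ i, x i = x1 i + x2 i := by
    intro i; simp [hx1, hx2]; split <;> simp
  -- Φ x1 ∈ K
  have hmem : (WithLp.toLp 2 (fun j => Φ.mulVec x1 j) : EuclideanSpace ℝ (Fin m)) ∈ K := by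
    have : (WithLp.toLp 2 (fun j => Φ.mulVec x1 j) : EuclideanSpace ℝ (Fin m))
        = ∑ i ∈ Tk, x i • (WithLp.toLp 2 (fun j => Φ j i) : EuclideanSpace ℝ (Fin m)) := by
      ext j
      simp only [Matrix.mulVec, dotProduct, hx1]
      rw [WithLp.ofLp_sum, Finset.sum_apply]
      simp only [mul_ite, mul_zero, Finset.sum_ite_mem, Finset.univ_inter,
        PiLp.smul_apply, smul_eq_mul]
      exact Finset.sum_congr rfl fun i _ => mul_comm _ _
    rw [this]
    exact Submodule.sum_mem _ fun i hi => Submodule.smul_mem _ _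
      (Submodule.subset_span ⟨i, hi, rfl⟩)
  -- r is the min distance
  have hle : ‖r‖ ≤ ‖y - (WithLp.toLp 2 (fun j => Φ.mulVec x1 j) : EuclideanSpace ℝ (Fin m))‖ := by
    rw [hr, ← Submodule.starProjection_apply, Submodule.starProjection_minimal]
    exact ciInf_le ⟨0, by rintro _ ⟨w, rfl⟩; positivity⟩
      (⟨_, hmem⟩ : K)
  have hy2 : y - (WithLp.toLp 2 (fun j => Φ.mulVec x1 j) : EuclideanSpace ℝ (Fin m))
      = (WithLp.toLp 2 (fun j => Φ.mulVec x2 j) : EuclideanSpace ℝ (Fin m)) := by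
    ext j
    have hx : x = x1 + x2 := funext hsplit
    simp only [PiLp.sub_apply, hy, hx, Matrix.mulVec_add, Pi.add_apply]
    ring
  have hsupp : (Finset.univ.filter fun i => x2 i ≠ 0).card ≤ N := by
    refine le_trans (Finset.card_le_card ?_) hcard
    intro i hi
    simp only [Finset.mem_filter, hx2] at hi
    rcases hi with ⟨-, hi⟩
    by_cases h : i ∈ Tk
    · simp [h] at hi
    · simp [h] at hi
      exact Finset.mem_sdiff.2 ⟨hT i hi, h⟩
  have hsum : ∑ i, x2 i ^ 2 = ∑ i ∈ T \ Tk, x i ^ 2 := by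
    rw [← Finset.sum_subset (Finset.subset_univ (T \ Tk))]
    · apply Finset.sum_congr rfl
      intro i hi
      rcases Finset.mem_sdiff.1 hi with ⟨-, h2⟩
      simp [hx2, h2]
    · intro i _ hi
      by_cases h : i ∈ Tk
      · simp [hx2, h]
      · simp [hx2, h]
        by_contra hx
        exact hi (Finset.mem_sdiff.2 ⟨hT i hx, h⟩)
  calc ‖r‖ ^ 2 ≤ ‖y - (WithLp.toLp 2 (fun j => Φ.mulVec x1 j) : EuclideanSpace ℝ (Fin m))‖ ^ 2 := by
        apply pow_le_pow_left₀ (norm_nonneg _) hle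
    _ = ∑ j, (Φ.mulVec x2 j) ^ 2 := by rw [hy2, euclid_norm_sq]
    _ ≤ (1 + δ) * ∑ i, x2 i ^ 2 := hRIP x2 hsupp
    _ = (1 + δ) * ∑ i ∈ T \ Tk, x i ^ 2 := by rw [hsum]
end

section
/- Let Φ be an m×n matrix whose columns φ_i satisfy ‖φ_i‖₂² ≤ 1 + δ₁ (RIP of order 1). Let T^l ⊆ T^{l+1} be index sets with T^{l+1} = T^l ∪ {t} where t = argmax_i |⟨r^l, φ_i⟩|, and let r^l = y - P_{T^l} y and r^{l+1} = y - P_{T^{l+1}} y. Then ‖r^l‖₂² - ‖r^{l+1}‖₂² ≥ ‖Φᵀ r^l‖_∞² / (1 + δ₁). -/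
open scoped RealInnerProductSpace


/-- One-step residual decrease of OMP: if `t` maximizes `|φᵢᵀ rˡ|` and every column
satisfies `‖φᵢ‖² ≤ 1 + δ₁`, then the residual power drops by at least
`‖Φᵀ rˡ‖_∞² / (1 + δ₁)`. -/
theorem omp_residual_decrease {m n : ℕ} (Φ : Matrix (Fin m) (Fin n) ℝ) (δ₁ : ℝ)
    (hδ : 0 ≤ δ₁)
    (hcolup : ∀ i : Fin n, ∑ j, (Φ j i) ^ 2 ≤ 1 + δ₁)
    (hcollow : ∀ i : Fin n, 1 - δ₁ ≤ ∑ j, (Φ j i) ^ 2) (hδ1 : δ₁ < 1)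
    (hne : (Finset.univ : Finset (Fin n)).Nonempty)
    (Tl : Finset (Fin n)) (t : Fin n)
    (y rl rl1 : EuclideanSpace ℝ (Fin m))
    (hrl : rl = y - (Submodule.orthogonalProjectionOnto
      (Submodule.span ℝ {v : EuclideanSpace ℝ (Fin m) | ∃ i ∈ Tl, v = WithLp.toLp 2 (fun j => Φ j i)}) y :
      EuclideanSpace ℝ (Fin m)))
    (hrl1 : rl1 = y - (Submodule.orthogonalProjectionOnto
      (Submodule.span ℝ {v : EuclideanSpace ℝ (Fin m) | ∃ i ∈ insert t Tl, v = WithLp.toLp 2 (fun j => Φ j i)}) y :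
      EuclideanSpace ℝ (Fin m)))
    (hmax : ∀ i : Fin n, |∑ j, Φ j i * rl j| ≤ |∑ j, Φ j t * rl j|) :
    ‖rl‖ ^ 2 - ‖rl1‖ ^ 2 ≥
      (Finset.univ.sup' hne fun i => |∑ j, Φ j i * rl j|) ^ 2 / (1 + δ₁) := by
  classical
  set K := Submodule.span ℝ {v : EuclideanSpace ℝ (Fin m) | ∃ i ∈ Tl, v = WithLp.toLp 2 (fun j => Φ j i)} with hK
  set K' := Submodule.span ℝ
    {v : EuclideanSpace ℝ (Fin m) | ∃ i ∈ insert t Tl, v = WithLp.toLp 2 (fun j => Φ j i)} with hK'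
  have hKK' : K ≤ K' := Submodule.span_mono (by
    rintro v ⟨i, hi, rfl⟩
    exact ⟨i, Finset.mem_insert_of_mem hi, rfl⟩)
  set φt : EuclideanSpace ℝ (Fin m) := WithLp.toLp 2 (fun j => Φ j t) with hφt
  have hφtK' : φt ∈ K' := Submodule.subset_span ⟨t, Finset.mem_insert_self _ _, rfl⟩
  -- inner products
  have hinner : ∀ x : EuclideanSpace ℝ (Fin m), (inner ℝ φt x : ℝ) = ∑ j, Φ j t * x j := by
    intro x
    simp [PiLp.inner_apply, RCLike.inner_apply, hφt, mul_comm]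
  have hs : ‖φt‖ ^ 2 = ∑ j, (Φ j t) ^ 2 := by
    rw [← real_inner_self_eq_norm_sq, hinner]
    congr 1; ext j; ring
  have hspos : (0:ℝ) < ‖φt‖ ^ 2 := by
    rw [hs]; linarith [hcollow t]
  set a : ℝ := inner ℝ φt rl with ha
  set s : ℝ := ‖φt‖ ^ 2 with hsdef
  set c : ℝ := a / s with hc
  set w : EuclideanSpace ℝ (Fin m) :=
    ((K.orthogonalProjectionOnto y : EuclideanSpace ℝ (Fin m)) + c • φt) with hw
  have hwK' : w ∈ K' :=
    K'.add_mem (hKK' (SetLike.coe_mem _)) (K'.smul_mem c hφtK')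
  have hywrl : y - w = rl - c • φt := by
    rw [hw, hrl]; abel
  -- minimality of orthogonal projection
  have hmin : ‖rl1‖ ≤ ‖y - w‖ := by
    rw [hrl1, ← Submodule.starProjection_apply, Submodule.starProjection_minimal]
    exact ciInf_le ⟨0, by rintro x ⟨u, rfl⟩; positivity⟩ (⟨w, hwK'⟩ : K')
  have hminsq : ‖rl1‖ ^ 2 ≤ ‖y - w‖ ^ 2 :=
    pow_le_pow_left₀ (norm_nonneg _) hmin 2
  have hexp : ‖y - w‖ ^ 2 = ‖rl‖ ^ 2 - a ^ 2 / s := by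
    have h1 : (inner ℝ rl φt : ℝ) = a := by rw [ha, real_inner_comm]
    rw [hywrl, norm_sub_sq_real, real_inner_smul_right, h1, norm_smul, mul_pow]
    have h2 : ‖c‖ ^ 2 = c ^ 2 := by rw [Real.norm_eq_abs, sq_abs]
    rw [h2, ← hsdef, hc]
    field_simp
    ring
  -- bound the sup
  have hMa : (Finset.univ.sup' hne fun i => |∑ j, Φ j i * rl j|) ≤ |a| := by
    apply Finset.sup'_le
    intro i _
    rw [ha, hinner]
    exact hmax i
  have hM0 : (0:ℝ) ≤ Finset.univ.sup' hne fun i => |∑ j, Φ j i * rl j| :=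
    le_trans (abs_nonneg (∑ j, Φ j t * rl j))
      (Finset.le_sup' (fun i => |∑ j, Φ j i * rl j|) (Finset.mem_univ t))
  have hMsq : (Finset.univ.sup' hne fun i => |∑ j, Φ j i * rl j|) ^ 2 ≤ a ^ 2 := by
    rw [← sq_abs a]
    exact pow_le_pow_left₀ hM0 hMa 2
  have hsle : s ≤ 1 + δ₁ := by rw [hs]; exact hcolup t
  have h1δ : (0:ℝ) < 1 + δ₁ := by linarith
  calc (Finset.univ.sup' hne fun i => |∑ j, Φ j i * rl j|) ^ 2 / (1 + δ₁)
      ≤ a ^ 2 / (1 + δ₁) := by gcongr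
    _ ≤ a ^ 2 / s := by gcongr
    _ ≤ ‖rl‖ ^ 2 - ‖rl1‖ ^ 2 := by
        have := hminsq
        rw [hexp] at this
        linarith
end
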